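/- arXiv:1912.13053 — 7 statements merged into one kernel-verified Lean document; each statement's English description precedes it below -/
import Mathlib

section
/- Let 0 < χ < 1 and C ≥ 0 be real numbers, and let (ε_l)_{l≥0} be a sequence of real numbers satisfying |ε_{l+1} − χ·ε_l| ≤ C·ε_l² for all l ≥ 0 and the a priori bound |ε_l| ≤ K·χ^l for all l ≥ 0 with some constant K ≥ 0. Then the limit ζ = lim_{l→∞} χ^{−l}·ε_l exists, and there is a constant C′ ≥ 0 such that |χ^{−l}·ε_l − ζ| ≤ C′·χ^l for all l ≥ 0. -/
open Filter Topology

/-- **Chaotic-phase convergence (first half of Lemma 1).**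
If `0 < χ < 1`, `C ≥ 0`, and the sequence `ε` satisfies
`|ε (l+1) - χ * ε l| ≤ C * (ε l)^2` together with the a priori bound
`|ε l| ≤ K * χ ^ l`, then `ζ = lim_{l → ∞} χ⁻ˡ * ε l` exists and
`|χ⁻ˡ * ε l - ζ| ≤ C' * χ ^ l` for some constant `C' ≥ 0`. -/
theorem chaotic_phase_epsilon_convergence
    (χ C K : ℝ) (hχ0 : 0 < χ) (hχ1 : χ < 1) (hC : 0 ≤ C) (hK : 0 ≤ K)
    (ε : ℕ → ℝ)
    (hrec : ∀ l : ℕ, |ε (l + 1) - χ * ε l| ≤ C * (ε l) ^ 2)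
    (hbound : ∀ l : ℕ, |ε l| ≤ K * χ ^ l) :
    ∃ ζ : ℝ, Tendsto (fun l : ℕ => ε l / χ ^ l) atTop (𝓝 ζ) ∧
      ∃ C' : ℝ, 0 ≤ C' ∧ ∀ l : ℕ, |ε l / χ ^ l - ζ| ≤ C' * χ ^ l := by
  set a : ℕ → ℝ := fun l => ε l / χ ^ l with ha
  set D : ℝ := C * K ^ 2 / χ with hD
  have hD0 : 0 ≤ D := by positivity
  have hpow : ∀ l : ℕ, (0:ℝ) < χ ^ l := fun l => pow_pos hχ0 l
  have hdist : ∀ l : ℕ, dist (a l) (a (l + 1)) ≤ D * χ ^ l := by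
    intro l
    have h1 : dist (a l) (a (l + 1)) = |ε (l + 1) - χ * ε l| / χ ^ (l + 1) := by
      rw [Real.dist_eq, abs_sub_comm, ← abs_of_pos (hpow (l + 1)), ← abs_div]
      congr 1
      simp only [ha]
      field_simp [pow_succ]
      ring
    rw [h1]
    have h2 : C * (ε l) ^ 2 ≤ C * (K * χ ^ l) ^ 2 := by
      apply mul_le_mul_of_nonneg_left _ hC
      calc (ε l) ^ 2 = |ε l| ^ 2 := (sq_abs _).symm
        _ ≤ (K * χ ^ l) ^ 2 := pow_le_pow_left₀ (abs_nonneg _) (hbound l) 2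
    have h3 : |ε (l + 1) - χ * ε l| / χ ^ (l + 1) ≤ C * (K * χ ^ l) ^ 2 / χ ^ (l + 1) := by
      gcongr
      exact (hrec l).trans h2
    refine h3.trans (le_of_eq ?_)
    rw [hD]
    field_simp [pow_succ]
    ring
  have hcauchy : CauchySeq a := cauchySeq_of_le_geometric χ D hχ1 hdist
  obtain ⟨ζ, hζ⟩ := cauchySeq_tendsto_of_complete hcauchy
  refine ⟨ζ, hζ, D / (1 - χ), div_nonneg hD0 (by linarith), fun l => ?_⟩
  have := dist_le_of_le_geometric_of_tendsto χ D hχ1 hdist hζ l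
  rw [Real.dist_eq] at this
  calc |ε l / χ ^ l - ζ| ≤ D * χ ^ l / (1 - χ) := this
    _ = D / (1 - χ) * χ ^ l := by ring
end

section
/- Let 0 < χ < 1, C ≥ 0, K ≥ 0, b ∈ ℝ. Let (ε_l)_{l≥0} satisfy |ε_{l+1} − χ·ε_l| ≤ C·ε_l² and |ε_l| ≤ K·χ^l for all l ≥ 0, and let ζ = lim_{l→∞} χ^{−l}·ε_l (which exists). Let (δ_l)_{l≥0} satisfy δ_{l+1} = b·ε_{l+1} + χ·δ_l + r_l with |r_l| ≤ C·ε_l² for all l ≥ 0. Then the sequence χ^{−l}·δ_l − l·b·ζ converges to some real number η, with a rate |χ^{−l}·δ_l − l·b·ζ − η| ≤ C′·χ^l for some constant C′ and all l ≥ 0; in particular lim_{l→∞} l^{−1}·χ^{−l}·δ_l = b·ζ. -/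
open Filter Topology

/-- **Chaotic-phase convergence (second half of Lemma 1 / Lemma 2).**
With `0 < χ < 1`, `ε` as in the first half of the lemma with limit
`ζ = lim χ⁻ˡ ε l`, and `δ` satisfying `δ (l+1) = b * ε (l+1) + χ * δ l + r l`
with `|r l| ≤ C * (ε l)^2`, the sequence `χ⁻ˡ * δ l - l * b * ζ` converges to
some `η` at rate `χ ^ l`; in particular `l⁻¹ * χ⁻ˡ * δ l → b * ζ`. -/
theorem chaotic_phase_delta_convergence
    (χ C K b ζ : ℝ) (hχ0 : 0 < χ) (hχ1 : χ < 1) (hC : 0 ≤ C) (hK : 0 ≤ K)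
    (ε δ r : ℕ → ℝ)
    (hrec : ∀ l : ℕ, |ε (l + 1) - χ * ε l| ≤ C * (ε l) ^ 2)
    (hbound : ∀ l : ℕ, |ε l| ≤ K * χ ^ l)
    (hζ : Tendsto (fun l : ℕ => ε l / χ ^ l) atTop (𝓝 ζ))
    (hδ : ∀ l : ℕ, δ (l + 1) = b * ε (l + 1) + χ * δ l + r l)
    (hr : ∀ l : ℕ, |r l| ≤ C * (ε l) ^ 2) :
    ∃ η : ℝ, Tendsto (fun l : ℕ => δ l / χ ^ l - (l : ℝ) * b * ζ) atTop (𝓝 η) ∧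
      (∃ C' : ℝ, ∀ l : ℕ, |δ l / χ ^ l - (l : ℝ) * b * ζ - η| ≤ C' * χ ^ l) ∧
      Tendsto (fun l : ℕ => ((l : ℝ))⁻¹ * (δ l / χ ^ l)) atTop (𝓝 (b * ζ)) := by
  have hχl : ∀ l : ℕ, (0:ℝ) < χ ^ l := fun l => pow_pos hχ0 l
  set D : ℝ := C * K ^ 2 / χ with hD
  have hD0 : 0 ≤ D := by positivity
  -- square bound on ε
  have hsq : ∀ l : ℕ, C * (ε l) ^ 2 / χ ^ (l + 1) ≤ D * χ ^ l := by
    intro l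
    rw [div_le_iff₀ (hχl (l+1))]
    have h1 : (ε l) ^ 2 ≤ (K * χ ^ l) ^ 2 := by
      rw [← sq_abs]
      exact pow_le_pow_left₀ (abs_nonneg _) (hbound l) 2
    have h2 : C * (ε l) ^ 2 ≤ C * (K * χ ^ l) ^ 2 := by
      exact mul_le_mul_of_nonneg_left h1 hC
    calc C * (ε l) ^ 2 ≤ C * (K * χ ^ l) ^ 2 := h2
      _ = D * χ ^ l * χ ^ (l + 1) := by
          rw [hD]
          field_simp
          ring
  set e : ℕ → ℝ := fun l => ε l / χ ^ l with he
  have hediff : ∀ l : ℕ, dist (e l) (e (l + 1)) ≤ D * χ ^ l := by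
    intro l
    rw [Real.dist_eq]
    have : e l - e (l + 1) = -((ε (l+1) - χ * ε l) / χ ^ (l+1)) := by
      simp only [he]
      field_simp [pow_succ]
      ring
    rw [this, abs_neg, abs_div, abs_of_pos (hχl (l+1))]
    have h3 : |ε (l + 1) - χ * ε l| / χ ^ (l+1) ≤ C * (ε l) ^ 2 / χ ^ (l+1) := by
      gcongr
      exact hrec l
    exact h3.trans (hsq l)
  have heζ : ∀ l : ℕ, |e l - ζ| ≤ D * χ ^ l / (1 - χ) := by
    intro l
    have := dist_le_of_le_geometric_of_tendsto χ D hχ1 hediff hζ l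
    rwa [Real.dist_eq] at this
  set A : ℝ := D / (1 - χ) with hA
  have hA0 : 0 ≤ A := by
    have : 0 < 1 - χ := by linarith
    positivity
  -- the sequence v
  set v : ℕ → ℝ := fun l => δ l / χ ^ l - (l : ℝ) * b * ζ with hv
  set B : ℝ := |b| * A + D with hB
  have hB0 : 0 ≤ B := by positivity
  have hvdiff : ∀ l : ℕ, dist (v l) (v (l + 1)) ≤ B * χ ^ l := by
    intro l
    rw [Real.dist_eq]
    have hstep : v l - v (l + 1) = -(b * (e (l+1) - ζ) + r l / χ ^ (l+1)) := by
      simp only [hv, he, hδ l]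
      push_cast
      field_simp [pow_succ]
      ring
    rw [hstep, abs_neg]
    have h1 : |b * (e (l+1) - ζ)| ≤ |b| * (A * χ ^ l) := by
      rw [abs_mul]
      refine mul_le_mul_of_nonneg_left ?_ (abs_nonneg b)
      have := heζ (l+1)
      have hle : D * χ ^ (l+1) / (1 - χ) ≤ A * χ ^ l := by
        have h1χ : 0 < 1 - χ := by linarith
        have hx := hχl l
        have heq : D * χ ^ (l+1) / (1 - χ) = A * (χ ^ l * χ) := by
          rw [hA, pow_succ]; ring
        rw [heq]
        nlinarith [mul_nonneg (mul_nonneg hA0 hx.le) h1χ.le]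
      exact this.trans hle
    have h2 : |r l / χ ^ (l+1)| ≤ D * χ ^ l := by
      rw [abs_div, abs_of_pos (hχl (l+1))]
      have h3 : |r l| / χ ^ (l+1) ≤ C * (ε l) ^ 2 / χ ^ (l+1) := by
        gcongr
        exact hr l
      exact h3.trans (hsq l)
    calc |b * (e (l+1) - ζ) + r l / χ ^ (l+1)|
        ≤ |b * (e (l+1) - ζ)| + |r l / χ ^ (l+1)| := abs_add_le _ _
      _ ≤ |b| * (A * χ ^ l) + D * χ ^ l := add_le_add h1 h2
      _ = B * χ ^ l := by rw [hB]; ring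
  have hcauchy : CauchySeq v := cauchySeq_of_le_geometric χ B hχ1 hvdiff
  obtain ⟨η, hη⟩ := cauchySeq_tendsto_of_complete hcauchy
  refine ⟨η, hη, ⟨B / (1 - χ), fun l => ?_⟩, ?_⟩
  · have := dist_le_of_le_geometric_of_tendsto χ B hχ1 hvdiff hη l
    rw [Real.dist_eq] at this
    calc |δ l / χ ^ l - (l : ℝ) * b * ζ - η| = |v l - η| := rfl
      _ ≤ B * χ ^ l / (1 - χ) := this
      _ = B / (1 - χ) * χ ^ l := by ring
  · -- third part
    have h0 : Tendsto (fun l : ℕ => ((l : ℝ))⁻¹ * v l + b * ζ) atTop (𝓝 (b * ζ)) := by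
      have hinv : Tendsto (fun l : ℕ => ((l : ℝ))⁻¹) atTop (𝓝 0) :=
        tendsto_inv_atTop_nhds_zero_nat
      have := (hinv.mul hη).add_const (b * ζ)
      simpa using this
    refine h0.congr' ?_
    filter_upwards [eventually_ge_atTop 1] with l hl
    have hl0 : ((l : ℝ)) ≠ 0 := by
      exact_mod_cast Nat.one_le_iff_ne_zero.mp hl
    simp only [hv]
    field_simp
    ring
end

section
/- Let a > 0 and β > 0 be real numbers, C ≥ 0, and let (x_l)_{l≥0} be a sequence of strictly positive real numbers with x_l → 0 such that |x_{l+1} − x_l + a·x_l^{1+β}| ≤ C·x_l^{1+2β} for all l. Then lim_{l→∞} l^{1/β}·x_l = (a·β)^{−1/β}. -/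
open Filter Topology

/-- **Power-law decay from the critical recursion.**
If `a, β > 0`, `C ≥ 0` and the positive sequence `x` tends to `0` and satisfies
`|x (l+1) - x l + a * (x l)^(1+β)| ≤ C * (x l)^(1+2β)`, then
`l^(1/β) * x l → (a * β)^(-1/β)`. -/
theorem critical_powerlaw_decay
    (a β C : ℝ) (ha : 0 < a) (hβ : 0 < β) (hC : 0 ≤ C)
    (x : ℕ → ℝ) (hxpos : ∀ l : ℕ, 0 < x l)
    (hx0 : Tendsto x atTop (𝓝 0))
    (hrec : ∀ l : ℕ, |x (l + 1) - x l + a * x l ^ (1 + β)| ≤ C * x l ^ (1 + 2 * β)) :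
    Tendsto (fun l : ℕ => (l : ℝ) ^ (1 / β) * x l) atTop (𝓝 ((a * β) ^ (-(1 / β)))) := by
  set t : ℕ → ℝ := fun l => x (l + 1) / x l - 1 with ht
  have hxne : ∀ l, x l ≠ 0 := fun l => (hxpos l).ne'
  have hxβpos : ∀ l, 0 < x l ^ β := fun l => Real.rpow_pos_of_pos (hxpos l) β
  -- x l ^ β → 0
  have hxβ : Tendsto (fun l => x l ^ β) atTop (𝓝 0) := by
    have h := hx0.rpow_const (p := β) (Or.inr hβ.le)
    simpa [Real.zero_rpow hβ.ne'] using h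
  -- key bound
  have hkey : ∀ l, |t l / x l ^ β + a| ≤ C * x l ^ β := by
    intro l
    have hp := hxpos l
    have h1 : x l ^ (1 + β) = x l * x l ^ β := by
      rw [Real.rpow_add hp, Real.rpow_one]
    have h2 : x l ^ (1 + 2 * β) = x l * x l ^ β * x l ^ β := by
      rw [show (1 : ℝ) + 2 * β = (1 + β) + β by ring, Real.rpow_add hp, h1]
    have heq : t l / x l ^ β + a
        = (x (l + 1) - x l + a * x l ^ (1 + β)) / (x l * x l ^ β) := by
      rw [h1, ht]
      field_simp
    rw [heq, abs_div, abs_of_pos (mul_pos hp (hxβpos l)),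
      div_le_iff₀ (mul_pos hp (hxβpos l))]
    calc |x (l + 1) - x l + a * x l ^ (1 + β)| ≤ C * x l ^ (1 + 2 * β) := hrec l
      _ = C * x l ^ β * (x l * x l ^ β) := by rw [h2]; ring
  have htend0 : Tendsto (fun l => t l / x l ^ β + a) atTop (𝓝 0) :=
    squeeze_zero_norm (fun n => by simpa using hkey n) (by simpa using hxβ.const_mul C)
  have htend : Tendsto (fun l => t l / x l ^ β) atTop (𝓝 (-a)) := by
    have h := htend0.sub_const a
    simp only [add_sub_cancel_right, zero_sub] at h
    exact h
  have ht0 : Tendsto t atTop (𝓝 0) := by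
    have h : Tendsto (fun l => t l / x l ^ β * x l ^ β) atTop (𝓝 (-a * 0)) :=
      htend.mul hxβ
    have h2 : Tendsto t atTop (𝓝 (-a * 0)) :=
      h.congr fun l => div_mul_cancel₀ (t l) (hxβpos l).ne'
    simpa using h2
  -- eventually t l < 0
  have hneg : ∀ᶠ l in atTop, t l < 0 := by
    have h : ∀ᶠ l in atTop, t l / x l ^ β < 0 :=
      htend.eventually (eventually_lt_nhds (by linarith))
    refine h.mono fun l hl => ?_
    have h2 := mul_neg_of_neg_of_pos hl (hxβpos l)
    rwa [div_mul_cancel₀ _ (hxβpos l).ne'] at h2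
  -- slope limit : ((1+s)^(-β) - 1)/s → -β as s → 0, s ≠ 0
  have hderiv : HasDerivAt (fun s : ℝ => (1 + s) ^ (-β)) (-β) 0 := by
    have h1 : HasDerivAt (fun s : ℝ => 1 + s) 1 0 := by
      simpa using (hasDerivAt_id (0 : ℝ)).const_add 1
    have h2 : HasDerivAt (fun z : ℝ => z ^ (-β)) (-β * (1 : ℝ) ^ (-β - 1)) 1 :=
      Real.hasDerivAt_rpow_const (Or.inl one_ne_zero)
    have h2' : HasDerivAt (fun z : ℝ => z ^ (-β)) (-β * (1 : ℝ) ^ (-β - 1)) (1 + 0) := by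
      simpa using h2
    have h3 := h2'.comp (0 : ℝ) h1
    simpa [Real.one_rpow, Function.comp_def] using h3
  have hslope : Tendsto (fun s : ℝ => ((1 + s) ^ (-β) - 1) / s) (𝓝[≠] (0 : ℝ)) (𝓝 (-β)) := by
    have h := hasDerivAt_iff_tendsto_slope.mp hderiv
    refine Tendsto.congr' ?_ h
    filter_upwards [self_mem_nhdsWithin] with s hs
    simp [slope_def_field, Real.one_rpow]
  have ht0' : Tendsto t atTop (𝓝[≠] (0 : ℝ)) :=
    tendsto_nhdsWithin_iff.mpr ⟨ht0, hneg.mono fun l hl => Set.mem_compl_singleton_iff.mpr hl.ne⟩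
  have hg : Tendsto (fun l => ((1 + t l) ^ (-β) - 1) / t l) atTop (𝓝 (-β)) :=
    hslope.comp ht0'
  have hprod := hg.mul htend
  -- telescoping differences converge
  have hdiff : Tendsto (fun l => x (l + 1) ^ (-β) - x l ^ (-β)) atTop (𝓝 (a * β)) := by
    have key : ∀ᶠ l in atTop,
        (((1 + t l) ^ (-β) - 1) / t l) * (t l / x l ^ β)
          = x (l + 1) ^ (-β) - x l ^ (-β) := by
      filter_upwards [hneg] with l hl
      have htne : t l ≠ 0 := hl.ne
      have he : 1 + t l = x (l + 1) / x l := by rw [ht]; ring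
      have h1t : (0 : ℝ) < 1 + t l := by
        rw [he]; exact div_pos (hxpos _) (hxpos _)
      have hx1 : x (l + 1) = x l * (1 + t l) := by
        rw [he, mul_comm, div_mul_cancel₀ _ (hxne l)]
      rw [hx1, Real.mul_rpow (hxpos l).le h1t.le, Real.rpow_neg (hxpos l).le]
      field_simp
    have h := Tendsto.congr' key hprod
    have he : -β * -a = a * β := by ring
    rwa [he] at h
  -- Cesàro
  have hces := hdiff.cesaro
  have hces' : Tendsto (fun n : ℕ => (n : ℝ)⁻¹ * (x n ^ (-β) - x 0 ^ (-β))) atTop (𝓝 (a * β)) :=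
    hces.congr fun n => by rw [Finset.sum_range_sub (fun i => x i ^ (-β))]
  have hninv : Tendsto (fun n : ℕ => ((n : ℝ))⁻¹) atTop (𝓝 0) := by
    exact (tendsto_natCast_atTop_atTop (R := ℝ)).inv_tendsto_atTop
  have hy : Tendsto (fun n : ℕ => (n : ℝ)⁻¹ * x n ^ (-β)) atTop (𝓝 (a * β)) := by
    have h := hces'.add (hninv.mul_const (x 0 ^ (-β)))
    have h2 : Tendsto (fun n : ℕ => (n : ℝ)⁻¹ * x n ^ (-β)) atTop (𝓝 (a * β + 0 * x 0 ^ (-β))) :=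
      h.congr fun n => by ring
    simpa using h2
  have habpos : (0 : ℝ) < a * β := mul_pos ha hβ
  have hfin := hy.rpow_const (p := -(1 / β)) (Or.inl habpos.ne')
  have heq : ∀ᶠ n : ℕ in atTop,
      ((n : ℝ)⁻¹ * x n ^ (-β)) ^ (-(1 / β)) = (n : ℝ) ^ (1 / β) * x n := by
    filter_upwards [eventually_gt_atTop 0] with n hn
    have hnpos : (0 : ℝ) < n := by exact_mod_cast hn
    rw [Real.mul_rpow (inv_nonneg.mpr hnpos.le) (Real.rpow_nonneg (hxpos n).le _)]
    congr 1
    · rw [Real.inv_rpow hnpos.le, Real.rpow_neg hnpos.le, inv_inv]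
    · rw [← Real.rpow_mul (hxpos n).le,
        show -β * -(1 / β) = 1 by field_simp, Real.rpow_one]
  exact Tendsto.congr' heq hfin
end

section
/- Let α > −1 and d ∈ ℝ. Let (c_l)_{l≥1} and (d_l)_{l≥1} be real sequences with l·c_l → −α, d_l → d, and 1 + c_l > 0 for all l. Let (x_l) satisfy x_{l+1} = (1 + c_l)·x_l + d_l for all l ≥ 1. Then lim_{l→∞} x_l / l = d / (1 + α). -/
open Filter Topology

private lemma harmonic_Ico_tendsto (N : ℕ) :
    Tendsto (fun l => ∑ k ∈ Finset.Ico N l, (1:ℝ)/k) atTop atTop := by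
  have hH : Tendsto (fun l => ∑ k ∈ Finset.range l, (1:ℝ)/k) atTop atTop := by
    rw [← tendsto_add_atTop_iff_nat 1]
    refine Real.tendsto_sum_range_one_div_nat_succ_atTop.congr fun n => ?_
    rw [Finset.sum_range_succ']
    simp
  have h2 := tendsto_atTop_add_const_right atTop
      (-(∑ k ∈ Finset.range N, (1:ℝ)/k)) hH
  refine h2.congr' ?_
  filter_upwards [eventually_ge_atTop N] with l hl
  rw [Finset.sum_Ico_eq_sub _ hl, sub_eq_add_neg]

private lemma decay_aux (γ : ℝ) (hγ : 0 < γ) (N : ℕ) (w : ℕ → ℝ)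
    (hw0 : ∀ l, 0 ≤ w l)
    (hrec : ∀ l, N ≤ l → w (l+1) ≤ (1 - γ/(l:ℝ)) * w l) :
    Tendsto w atTop (𝓝 0) := by
  set S : ℕ → ℝ := fun l => ∑ k ∈ Finset.Ico N l, (1:ℝ)/k with hS
  have key : ∀ l, N ≤ l → w l ≤ w N * Real.exp (-γ * S l) := by
    intro l hl
    induction l, hl using Nat.le_induction with
    | base => simp [hS]
    | succ n hn ih =>
      have hexp : 1 - γ/(n:ℝ) ≤ Real.exp (-(γ/(n:ℝ))) := by
        have := Real.add_one_le_exp (-(γ/(n:ℝ)))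
        linarith
      have hSn : S (n+1) = S n + 1/(n:ℝ) := by
        simp [hS, Finset.sum_Ico_succ_top hn]
      calc w (n+1) ≤ (1 - γ/(n:ℝ)) * w n := hrec n hn
        _ ≤ Real.exp (-(γ/(n:ℝ))) * w n :=
            mul_le_mul_of_nonneg_right hexp (hw0 n)
        _ ≤ Real.exp (-(γ/(n:ℝ))) * (w N * Real.exp (-γ * S n)) :=
            mul_le_mul_of_nonneg_left ih (Real.exp_pos _).le
        _ = w N * Real.exp (-γ * S (n+1)) := by
            rw [hSn, show -γ * (S n + 1/(n:ℝ)) = (-(γ/(n:ℝ))) + (-γ * S n) by ring,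
              Real.exp_add]
            ring
  have hRHS : Tendsto (fun l => w N * Real.exp (-γ * S l)) atTop (𝓝 0) := by
    have h1 : Tendsto (fun l => γ * S l) atTop atTop :=
      (harmonic_Ico_tendsto N).const_mul_atTop hγ
    have h2 : Tendsto (fun l => -γ * S l) atTop atBot := by
      have := tendsto_neg_atTop_atBot.comp h1
      refine this.congr fun l => ?_
      simp [Function.comp]
    have h3 : Tendsto (fun l => Real.exp (-γ * S l)) atTop (𝓝 0) :=
      Real.tendsto_exp_atBot.comp h2
    have := h3.const_mul (w N)
    simpa using this
  refine squeeze_zero' (Eventually.of_forall hw0) ?_ hRHS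
  filter_upwards [eventually_ge_atTop N] with l hl using key l hl

/-- **Linear growth from a perturbed affine recursion (critical-line NTK).**
If `l * c l → -α` with `α > -1`, `d l → d`, `1 + c l > 0`, and
`x (l+1) = (1 + c l) * x l + d l` for all `l ≥ 1`, then `x l / l → d / (1 + α)`. -/
theorem critical_line_linear_growth
    (α d : ℝ) (hα : -1 < α)
    (c dseq x : ℕ → ℝ)
    (hc : Tendsto (fun l : ℕ => (l : ℝ) * c l) atTop (𝓝 (-α)))
    (hd : Tendsto dseq atTop (𝓝 d))
    (hpos : ∀ l : ℕ, 1 ≤ l → 0 < 1 + c l)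
    (hrec : ∀ l : ℕ, 1 ≤ l → x (l + 1) = (1 + c l) * x l + dseq l) :
    Tendsto (fun l : ℕ => x l / (l : ℝ)) atTop (𝓝 (d / (1 + α))) := by
  have hβ : 0 < 1 + α := by linarith
  set β : ℝ := 1 + α with hβdef
  set L : ℝ := d / β with hL
  set z : ℕ → ℝ := fun l => x l / l - L with hz
  suffices h : Tendsto z atTop (𝓝 0) by
    have := h.add_const L
    simp only [hz, sub_add_cancel, zero_add] at this
    exact this
  set A : ℕ → ℝ := fun l => (l:ℝ) * (1 + c l) / ((l:ℝ)+1) with hA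
  set r : ℕ → ℝ := fun l => (A l - 1) * L + dseq l / ((l:ℝ)+1) with hr
  have hdiv : Tendsto (fun l : ℕ => (l:ℝ)/((l:ℝ)+1)) atTop (𝓝 1) :=
    tendsto_natCast_div_add_atTop (1:ℝ)
  -- limit of l * (A l - 1)
  have hB : Tendsto (fun l : ℕ => (l:ℝ) * (A l - 1)) atTop (𝓝 (-β)) := by
    have heq : ∀ l : ℕ, (l:ℝ)*(A l - 1)
        = ((l:ℝ)/((l:ℝ)+1)) * ((l:ℝ)*c l - 1) := by
      intro l
      rcases Nat.eq_zero_or_pos l with h | h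
      · subst h; simp [hA]
      · have hl0 : ((l:ℝ)) ≠ 0 := Nat.cast_ne_zero.mpr h.ne'
        have h1 : ((l:ℝ)+1) ≠ 0 := by positivity
        simp only [hA]
        field_simp
        ring_nf
    have hlim : Tendsto (fun l : ℕ => ((l:ℝ)/((l:ℝ)+1)) * ((l:ℝ)*c l - 1))
        atTop (𝓝 (1 * (-α - 1))) := hdiv.mul (hc.sub_const 1)
    refine Tendsto.congr (fun l => (heq l).symm) ?_
    convert hlim using 2
    rw [hβdef]; ring
  -- limit of l * r l
  have hC : Tendsto (fun l : ℕ => (l:ℝ) * r l) atTop (𝓝 0) := by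
    have heq : ∀ l : ℕ, (l:ℝ) * r l
        = ((l:ℝ)*(A l - 1)) * L + ((l:ℝ)/((l:ℝ)+1)) * dseq l := by
      intro l
      rcases Nat.eq_zero_or_pos l with h | h
      · subst h; simp [hr]
      · have hl0 : ((l:ℝ)) ≠ 0 := Nat.cast_ne_zero.mpr h.ne'
        have h1 : ((l:ℝ)+1) ≠ 0 := by positivity
        simp only [hr]
        field_simp
    have hlim : Tendsto (fun l : ℕ => ((l:ℝ)*(A l - 1)) * L + ((l:ℝ)/((l:ℝ)+1)) * dseq l)
        atTop (𝓝 ((-β) * L + 1 * d)) := (hB.mul_const L).add (hdiv.mul hd)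
    have hval : (-β) * L + 1 * d = 0 := by
      rw [hL]
      field_simp
      ring
    rw [hval] at hlim
    exact Tendsto.congr (fun l => (heq l).symm) hlim
  -- recursion for z
  have hrecz : ∀ l : ℕ, 1 ≤ l → z (l+1) = A l * z l + r l := by
    intro l hl
    have hl0 : ((l:ℝ)) ≠ 0 := Nat.cast_ne_zero.mpr (by omega)
    have hl1 : ((l:ℝ)+1) ≠ 0 := by positivity
    simp only [hz, hA, hr]
    rw [hrec l hl]
    push_cast
    field_simp
    ring
  have hA0 : ∀ l : ℕ, 1 ≤ l → 0 ≤ A l := by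
    intro l hl
    have h1 := hpos l hl
    have h2 : (0:ℝ) ≤ l := Nat.cast_nonneg l
    have h3 : (0:ℝ) < (l:ℝ)+1 := by positivity
    simp only [hA]
    positivity
  -- epsilon argument
  rw [Metric.tendsto_atTop]
  intro ε hε
  set γ : ℝ := β/2 with hγdef
  have hγ : 0 < γ := by positivity
  have ev1 : ∀ᶠ l : ℕ in atTop, (l:ℝ) * (A l - 1) ≤ -γ :=
    hB.eventually_le_const (by rw [hγdef]; linarith)
  have ev2 : ∀ᶠ l : ℕ in atTop, |(l:ℝ) * r l| ≤ γ * (ε/2) := by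
    have habs : Tendsto (fun l : ℕ => |(l:ℝ) * r l|) atTop (𝓝 0) := by
      have := hC.abs; simpa using this
    exact habs.eventually_le_const (by positivity)
  obtain ⟨N, hN⟩ := (ev1.and (ev2.and (eventually_ge_atTop 1))).exists_forall_of_atTop
  -- key bounds for l ≥ N
  have hbnd : ∀ l : ℕ, N ≤ l →
      A l ≤ 1 - γ/(l:ℝ) ∧ |r l| ≤ (γ/(l:ℝ)) * (ε/2) ∧ 1 ≤ l := by
    intro l hl
    obtain ⟨h1, h2, h3⟩ := hN l hl
    have hlpos : (0:ℝ) < l := by exact_mod_cast h3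
    constructor
    · have hstep : A l - 1 ≤ (-γ)/(l:ℝ) :=
        (le_div_iff₀ hlpos).mpr (by linarith [h1])
      rw [neg_div] at hstep
      linarith
    constructor
    · have h4 : |r l| * l ≤ γ * (ε/2) := by
        calc |r l| * l = |(l:ℝ) * r l| := by
              rw [abs_mul, abs_of_nonneg hlpos.le]; ring
          _ ≤ γ * (ε/2) := h2
      rw [div_mul_eq_mul_div, le_div_iff₀ hlpos]
      linarith
    · exact h3
  -- the auxiliary sequence
  set w : ℕ → ℝ := fun l => max (|z l| - ε/2) 0 with hw
  have hw0 : ∀ l, 0 ≤ w l := fun l => le_max_right _ _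
  have hwrec : ∀ l, N ≤ l → w (l+1) ≤ (1 - γ/(l:ℝ)) * w l := by
    intro l hl
    obtain ⟨h1, h2, h3⟩ := hbnd l hl
    have hA0l := hA0 l h3
    have hfac : 0 ≤ 1 - γ/(l:ℝ) := le_trans hA0l h1
    have hzb : |z (l+1)| ≤ (1 - γ/(l:ℝ)) * |z l| + (γ/(l:ℝ)) * (ε/2) := by
      rw [hrecz l h3]
      calc |A l * z l + r l| ≤ |A l * z l| + |r l| := abs_add_le _ _
        _ = A l * |z l| + |r l| := by rw [abs_mul, abs_of_nonneg hA0l]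
        _ ≤ (1 - γ/(l:ℝ)) * |z l| + (γ/(l:ℝ)) * (ε/2) := by
            have := abs_nonneg (z l)
            nlinarith
    have hwl : |z l| - ε/2 ≤ w l := le_max_left _ _
    simp only [hw]
    refine max_le ?_ (mul_nonneg hfac (hw0 l))
    have : (1 - γ/(l:ℝ)) * (|z l| - ε/2) ≤ (1 - γ/(l:ℝ)) * w l :=
      mul_le_mul_of_nonneg_left hwl hfac
    nlinarith
  have hwlim : Tendsto w atTop (𝓝 0) := decay_aux γ hγ N w hw0 hwrec
  obtain ⟨M, hM⟩ := (Metric.tendsto_atTop.mp hwlim (ε/2) (by positivity))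
  refine ⟨M, fun n hn => ?_⟩
  have := hM n hn
  rw [Real.dist_eq, sub_zero] at this ⊢
  have h1 : |z n| - ε/2 ≤ w n := le_max_left _ _
  have h2 : w n ≤ |w n| := le_abs_self _
  linarith
end

section
/- Let m ≥ 2, 0 < ρ < 1, and 0 ≤ σ_b² < p* be real numbers. The real symmetric m×m matrix M with diagonal entries (1/ρ)·p* + (1 − 1/ρ)·σ_b² and all off-diagonal entries equal to p* is positive definite, and its condition number (largest eigenvalue divided by smallest eigenvalue) equals m·p* / ((1/ρ − 1)·(p* − σ_b²)) + 1. -/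
open Matrix

/-- **Dropout improves the conditioning of the limiting NTK.**
For `m ≥ 2`, `0 < ρ < 1` and `0 ≤ σb2 < p`, the symmetric matrix with diagonal
entries `(1/ρ) * p + (1 - 1/ρ) * σb2` and off-diagonal entries `p` is positive
definite with condition number `m * p / ((1/ρ - 1) * (p - σb2)) + 1`. -/
theorem dropout_ntk_condition_number
    (m : ℕ) (hm : 2 ≤ m) (ρ p σb2 : ℝ)
    (hρ0 : 0 < ρ) (hρ1 : ρ < 1) (hσ0 : 0 ≤ σb2) (hσp : σb2 < p)
    (M : Matrix (Fin m) (Fin m) ℝ)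
    (hM : M = Matrix.of fun i j =>
      if i = j then (1 / ρ) * p + (1 - 1 / ρ) * σb2 else p)
    (hHerm : M.IsHermitian) :
    M.PosDef ∧
      (⨆ i, hHerm.eigenvalues i) / (⨅ i, hHerm.eigenvalues i)
        = (m : ℝ) * p / ((1 / ρ - 1) * (p - σb2)) + 1 := by
  have hρ : (1 : ℝ) < 1 / ρ := (one_lt_div hρ0).mpr hρ1
  set a : ℝ := (1 / ρ - 1) * (p - σb2) with ha_def
  have ha : 0 < a := mul_pos (by linarith) (by linarith)
  have hp : 0 < p := lt_of_le_of_lt hσ0 hσp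
  have hmp : 0 < (m : ℝ) * p := mul_pos (by positivity) hp
  set b : ℝ := a + (m : ℝ) * p with hb_def
  have hab : a < b := by rw [hb_def]; linarith
  -- decomposition M = a • 1 + p • J
  set J : Matrix (Fin m) (Fin m) ℝ := Matrix.of (fun _ _ => (1 : ℝ)) with hJ_def
  have hMdec : M = a • (1 : Matrix (Fin m) (Fin m) ℝ) + p • J := by
    rw [hM]
    ext i j
    simp only [of_apply, Matrix.add_apply, Matrix.smul_apply, Matrix.one_apply, hJ_def,
      smul_eq_mul, mul_one]
    rw [ha_def]
    split_ifs with h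
    · field_simp
      ring
    · ring
  have hJJ : J * J = (m : ℝ) • J := by
    ext i j
    simp [hJ_def, Matrix.mul_apply]
  -- quadratic polynomial identity
  have hpoly : (M - a • (1 : Matrix (Fin m) (Fin m) ℝ)) *
      (M - b • (1 : Matrix (Fin m) (Fin m) ℝ)) = 0 := by
    rw [hMdec]
    have h1 : a • (1 : Matrix (Fin m) (Fin m) ℝ) + p • J - a • 1 = p • J := by
      abel
    have h2 : a • (1 : Matrix (Fin m) (Fin m) ℝ) + p • J - b • 1
        = p • J - ((m : ℝ) * p) • (1 : Matrix (Fin m) (Fin m) ℝ) := by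
      rw [hb_def, add_smul]; abel
    rw [h1, h2, Matrix.mul_sub, Matrix.smul_mul, Matrix.smul_mul, Matrix.mul_smul,
      Matrix.mul_smul, hJJ, Matrix.mul_one]
    simp only [smul_smul]
    rw [sub_eq_zero]
    congr 1
    ring
  -- each eigenvalue is a or b
  set μ : Fin m → ℝ := hHerm.eigenvalues with hμ_def
  have heig : ∀ i, μ i = a ∨ μ i = b := by
    intro i
    set v : Fin m → ℝ := ⇑(hHerm.eigenvectorBasis i) with hv_def
    have hv0 : v ≠ 0 := by
      have hne := hHerm.eigenvectorBasis.orthonormal.ne_zero i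
      intro h
      apply hne
      ext j
      exact congrFun h j
    have hMv : M *ᵥ v = μ i • v := hHerm.mulVec_eigenvectorBasis i
    have h1 : (M - b • (1 : Matrix (Fin m) (Fin m) ℝ)) *ᵥ v = (μ i - b) • v := by
      rw [Matrix.sub_mulVec, hMv, Matrix.smul_mulVec, Matrix.one_mulVec]
      module
    have h2 : (M - a • (1 : Matrix (Fin m) (Fin m) ℝ)) *ᵥ ((μ i - b) • v)
        = ((μ i - b) * (μ i - a)) • v := by
      rw [Matrix.mulVec_smul, Matrix.sub_mulVec, hMv, Matrix.smul_mulVec,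
        Matrix.one_mulVec]
      module
    have h3 : ((μ i - b) * (μ i - a)) • v = 0 := by
      rw [← h2, ← h1, Matrix.mulVec_mulVec, hpoly, Matrix.zero_mulVec]
    have h4 : (μ i - b) * (μ i - a) = 0 := by
      by_contra h
      exact hv0 (by simpa [smul_eq_zero, h] using h3)
    rcases mul_eq_zero.mp h4 with h | h
    · right; linarith [sub_eq_zero.mp h]
    · left; linarith [sub_eq_zero.mp h]
  -- trace identity
  have htrace : ∑ i, μ i = (m : ℝ) * (a + p) := by
    have h1 : Matrix.trace ((star (hHerm.eigenvectorUnitary : Matrix (Fin m) (Fin m) ℝ)) * M *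
        (hHerm.eigenvectorUnitary : Matrix (Fin m) (Fin m) ℝ))
        = Matrix.trace (Matrix.diagonal (RCLike.ofReal ∘ μ)) := by
      have h0 := Matrix.IsHermitian.conjStarAlgAut_star_eigenvectorUnitary hHerm
      simp only [Unitary.conjStarAlgAut_star_apply, Unitary.coe_star] at h0
      rw [h0]
    rw [Matrix.trace_mul_cycle,
      show (hHerm.eigenvectorUnitary : Matrix (Fin m) (Fin m) ℝ) *
        star (hHerm.eigenvectorUnitary : Matrix (Fin m) (Fin m) ℝ) = 1 from
        Matrix.mem_unitaryGroup_iff.mp hHerm.eigenvectorUnitary.2,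
      Matrix.one_mul] at h1
    have h2 : Matrix.trace M = ∑ i, μ i := by
      rw [h1, Matrix.trace_diagonal]
      simp
    have h3 : Matrix.trace M = (m : ℝ) * (a + p) := by
      rw [hM, ha_def]
      simp only [Matrix.trace, Matrix.diag, of_apply, if_pos rfl, eq_self_iff_true,
        if_true, Finset.sum_const,
        Finset.card_univ, Fintype.card_fin, nsmul_eq_mul]
      ring
    rw [← h2, h3]
  -- counting: exactly one eigenvalue equals b
  classical
  set T : Finset (Fin m) := Finset.univ.filter (fun i => μ i = b) with hT_def
  have hsum : ∑ i, μ i = (m : ℝ) * a + (T.card : ℝ) * ((m : ℝ) * p) := by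
    rw [← Finset.sum_filter_add_sum_filter_not Finset.univ (fun i => μ i = b)]
    have hTb : ∑ i ∈ T, μ i = (T.card : ℝ) * b := by
      rw [Finset.sum_congr rfl (fun i hi => (Finset.mem_filter.mp hi).2)]
      simp [mul_comm, hT_def]
    have hTa : ∑ i ∈ Finset.univ.filter (fun i => ¬ μ i = b), μ i
        = ((Finset.univ.filter (fun i => ¬ μ i = b)).card : ℝ) * a := by
      rw [Finset.sum_congr rfl (fun i hi => by
        rcases heig i with h | h
        · exact h
        · exact absurd h (Finset.mem_filter.mp hi).2)]
      simp [mul_comm]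
    rw [hTb, hTa]
    have hcard : (Finset.univ.filter (fun i => ¬ μ i = b)).card = m - T.card := by
      rw [hT_def, Finset.filter_not, Finset.card_sdiff_of_subset (Finset.filter_subset _ _)]
      simp
    rw [hcard]
    have hle : T.card ≤ m := by
      calc T.card ≤ Finset.univ.card := Finset.card_filter_le _ _
      _ = m := by simp
    have hcast : ((m - T.card : ℕ) : ℝ) = (m : ℝ) - (T.card : ℝ) := by
      rw [Nat.cast_sub hle]
    rw [hcast, hb_def]
    ring
  have hTcard : T.card = 1 := by
    have key : (T.card : ℝ) * ((m : ℝ) * p) = 1 * ((m : ℝ) * p) := by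
      rw [hsum] at htrace
      nlinarith
    have : (T.card : ℝ) = 1 := mul_right_cancel₀ hmp.ne' key
    exact_mod_cast this
  obtain ⟨i₀, hi₀⟩ := Finset.card_eq_one.mp hTcard
  have hμi₀ : μ i₀ = b := by
    have hmem : i₀ ∈ T := hi₀ ▸ Finset.mem_singleton_self i₀
    exact (Finset.mem_filter.mp hmem).2
  -- there is an index with eigenvalue a
  have hexa : ∃ j, μ j = a := by
    have hcard2 : 1 < (Finset.univ : Finset (Fin m)).card := by
      simpa using lt_of_lt_of_le one_lt_two hm
    obtain ⟨j, _, hj⟩ := Finset.exists_mem_ne hcard2 i₀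
    rcases heig j with h | h
    · exact ⟨j, h⟩
    · exfalso
      have hmem : j ∈ T := Finset.mem_filter.mpr ⟨Finset.mem_univ j, h⟩
      rw [hi₀, Finset.mem_singleton] at hmem
      exact hj hmem
  obtain ⟨j₀, hj₀⟩ := hexa
  -- sup and inf
  have hub : ∀ i, μ i ≤ b := by
    intro i
    rcases heig i with h | h
    · rw [h]; exact hab.le
    · rw [h]
  have hlb : ∀ i, a ≤ μ i := by
    intro i
    rcases heig i with h | h
    · rw [h]
    · rw [h]; exact hab.le
  have hne : Nonempty (Fin m) := ⟨i₀⟩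
  have hsup : (⨆ i, μ i) = b := by
    apply le_antisymm
    · exact ciSup_le hub
    · rw [← hμi₀]
      exact le_ciSup (Set.Finite.bddAbove (Set.finite_range μ)) i₀
  have hinf : (⨅ i, μ i) = a := by
    apply le_antisymm
    · rw [← hj₀]
      exact ciInf_le (Set.Finite.bddBelow (Set.finite_range μ)) j₀
    · exact le_ciInf hlb
  constructor
  · refine Matrix.PosDef.of_dotProduct_mulVec_pos hHerm fun x hx => ?_
    have hJx : J *ᵥ x = fun _ => ∑ k, x k := by
      ext i
      simp [hJ_def, Matrix.mulVec, dotProduct]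
    have hxx : 0 < dotProduct x x := by
      have hnn : 0 ≤ dotProduct x x :=
        Finset.sum_nonneg fun i _ => mul_self_nonneg (x i)
      have hne0 : dotProduct x x ≠ 0 :=
        fun h => hx (dotProduct_self_eq_zero.mp h)
      exact hnn.lt_of_ne' hne0
    have hcalc : dotProduct x (M *ᵥ x)
        = a * dotProduct x x + p * (∑ k, x k) ^ 2 := by
      rw [hMdec, Matrix.add_mulVec, Matrix.smul_mulVec, Matrix.smul_mulVec,
        Matrix.one_mulVec, hJx, dotProduct_add, dotProduct_smul,
        dotProduct_smul]
      simp only [smul_eq_mul]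
      congr 1
      congr 1
      simp only [dotProduct]
      rw [← Finset.sum_mul]
      exact (sq (∑ k, x k)).symm
    have hstar : star x = x := by
      ext i
      simp
    rw [hstar, hcalc]
    nlinarith [sq_nonneg (∑ k, x k), mul_pos ha hxx, mul_nonneg hp.le (sq_nonneg (∑ k, x k))]
  · rw [hsup, hinf, hb_def, add_div, div_self ha.ne']
    ring
end

section
/- Let m ≥ 2, k ≥ 1, and let Y ∈ ℝ^m satisfy 𝟙ᵀY = 0. Let S ≥ 0 and let (p_l), (s_l), (u_l), (δ_l) be real sequences with p_l → ∞, |s_l| ≤ S, |u_l| ≤ S, 0 ≤ δ_l ≤ S. Let M_l = p_l·Id + s_l·(𝟙𝟙ᵀ − Id) + E_l be real m×m matrices with ‖E_l‖ ≤ δ_l (operator norm), and T_l = u_l·𝟙_k𝟙_mᵀ + F_l real k×m matrices with ‖F_l‖ ≤ δ_l. Then there exist a constant C and an index L such that for all l ≥ L, M_l is invertible and ‖T_l·M_l^{−1}·Y‖ ≤ C·(δ_l + p_l^{−1})·p_l^{−1}·‖Y‖. -/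
open Matrix Filter Topology

/-- The `ℓ²` operator norm of a (possibly rectangular) real matrix. -/
noncomputable def euclideanOpNorm {m k : ℕ} (A : Matrix (Fin k) (Fin m) ℝ) : ℝ :=
  ‖LinearMap.toContinuousLinearMap (Matrix.toEuclideanLin A)‖

lemma mulVec_norm_le {a b : ℕ} (A : Matrix (Fin a) (Fin b) ℝ) (v : EuclideanSpace ℝ (Fin b)) :
    ‖(show EuclideanSpace ℝ (Fin a) from WithLp.toLp 2 (A.mulVec v))‖ ≤ euclideanOpNorm A * ‖v‖ :=
  (LinearMap.toContinuousLinearMap (Matrix.toEuclideanLin A)).le_opNorm v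

lemma abs_sum_le_sqrt {n : ℕ} (v : EuclideanSpace ℝ (Fin n)) :
    |∑ i, v i| ≤ Real.sqrt n * ‖v‖ := by
  classical
  set o : EuclideanSpace ℝ (Fin n) := (WithLp.equiv 2 _).symm (fun _ => (1:ℝ)) with ho
  have hinner : (inner ℝ o v : ℝ) = ∑ i, v i := by
    simp [PiLp.inner_apply, ho, RCLike.inner_apply]
  have hno : ‖o‖ = Real.sqrt n := by
    rw [EuclideanSpace.norm_eq]
    simp [ho]
  calc |∑ i, v i| = |(inner ℝ o v : ℝ)| := by rw [hinner]
    _ ≤ ‖o‖ * ‖v‖ := abs_real_inner_le_norm o v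
    _ = Real.sqrt n * ‖v‖ := by rw [hno]

lemma norm_const_vec {n : ℕ} (c : ℝ) :
    ‖(show EuclideanSpace ℝ (Fin n) from WithLp.toLp 2 (fun _ => c))‖ = Real.sqrt n * |c| := by
  rw [EuclideanSpace.norm_eq]
  simp [Real.sqrt_mul', mul_comm, Real.sqrt_sq_eq_abs]

lemma sqrt_nat_le (n : ℕ) (hn : 1 ≤ n) : Real.sqrt n ≤ (n : ℝ) := by
  have h1 : (1:ℝ) ≤ (n:ℝ) := by exact_mod_cast hn
  nlinarith [Real.sq_sqrt (by positivity : (0:ℝ) ≤ (n:ℝ)),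
    Real.sqrt_nonneg (n:ℝ), Real.sqrt_le_sqrt (by nlinarith : (n:ℝ) ≤ (n:ℝ)^2),
    Real.sqrt_sq (by positivity : (0:ℝ) ≤ (n:ℝ))]

set_option maxHeartbeats 1000000 in
/-- **Chaotic-phase mean-predictor estimate.**
With centered labels `Y` (`𝟙ᵀY = 0`), `M l = p l • Id + s l • (𝟙𝟙ᵀ - Id) + E l`
with `p l → ∞`, `|s l|, |u l|, δ l ≤ S`, `‖E l‖ ≤ δ l`, and
`T l = u l • 𝟙_k𝟙_mᵀ + F l` with `‖F l‖ ≤ δ l`, there are `C` and `L` such that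
for `l ≥ L` the matrix `M l` is invertible and
`‖T l * (M l)⁻¹ * Y‖ ≤ C * (δ l + (p l)⁻¹) * (p l)⁻¹ * ‖Y‖`. -/
theorem chaotic_phase_mean_predictor_estimate
    (m k : ℕ) (hm : 2 ≤ m) (hk : 1 ≤ k)
    (Y : EuclideanSpace ℝ (Fin m)) (hY : (∑ i, Y i) = 0)
    (S : ℝ) (hS : 0 ≤ S)
    (p s u δ : ℕ → ℝ)
    (hp : Tendsto p atTop atTop)
    (hs : ∀ l, |s l| ≤ S) (hu : ∀ l, |u l| ≤ S)
    (hδ0 : ∀ l, 0 ≤ δ l) (hδS : ∀ l, δ l ≤ S)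
    (M E : ℕ → Matrix (Fin m) (Fin m) ℝ)
    (T F : ℕ → Matrix (Fin k) (Fin m) ℝ)
    (hM : ∀ l, M l = p l • (1 : Matrix (Fin m) (Fin m) ℝ)
      + s l • (Matrix.of (fun _ _ => (1 : ℝ)) - 1) + E l)
    (hE : ∀ l, euclideanOpNorm (E l) ≤ δ l)
    (hT : ∀ l, T l = u l • Matrix.of (fun (_ : Fin k) (_ : Fin m) => (1 : ℝ)) + F l)
    (hF : ∀ l, euclideanOpNorm (F l) ≤ δ l) :
    ∃ (C : ℝ) (L : ℕ), ∀ l : ℕ, L ≤ l →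
      IsUnit (M l).det ∧
      ‖(show EuclideanSpace ℝ (Fin k) from WithLp.toLp 2 ((T l).mulVec ((M l)⁻¹.mulVec Y)))‖
        ≤ C * (δ l + (p l)⁻¹) * (p l)⁻¹ * ‖Y‖ := by
  classical
  have hm1 : (2:ℝ) ≤ (m:ℝ) := by exact_mod_cast hm
  have hk1 : (1:ℝ) ≤ (k:ℝ) := by exact_mod_cast hk
  obtain ⟨L, hL⟩ : ∃ L : ℕ, ∀ l, L ≤ l → 2*((m:ℝ)+2)*S + 2 ≤ p l :=
    (hp.eventually_ge_atTop (2*((m:ℝ)+2)*S + 2)).exists_forall_of_atTop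
  refine ⟨4*S*(k:ℝ)*(m:ℝ) + 2, L, fun l hl => ?_⟩
  have hPl := hL l hl
  have hp2 : (2:ℝ) ≤ p l := by nlinarith
  have hppos : (0:ℝ) < p l := by linarith
  have hhalf : ((m:ℝ)+2)*S ≤ p l / 2 := by nlinarith
  -- the mulVec of the all-ones m×m matrix
  have hJ : ∀ v : Fin m → ℝ,
      (Matrix.of (fun (_ : Fin m) (_ : Fin m) => (1:ℝ))).mulVec v = fun _ => ∑ i, v i := by
    intro v; funext i; simp [Matrix.mulVec, dotProduct]
  have hdecomp : ∀ v : Fin m → ℝ,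
      (M l).mulVec v = p l • v + s l • ((fun _ => ∑ i, v i) - v) + (E l).mulVec v := by
    intro v
    rw [hM l, Matrix.add_mulVec, Matrix.add_mulVec, Matrix.smul_mulVec,
      Matrix.smul_mulVec, Matrix.one_mulVec, Matrix.sub_mulVec, Matrix.one_mulVec, hJ]
  -- lower bound for ‖M v‖
  have key : ∀ v : EuclideanSpace ℝ (Fin m),
      p l / 2 * ‖v‖ ≤ ‖(show EuclideanSpace ℝ (Fin m) from WithLp.toLp 2 ((M l).mulVec v))‖ := by
    intro v
    set Mv : EuclideanSpace ℝ (Fin m) := WithLp.toLp 2 ((M l).mulVec v) with hMv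
    set Ev : EuclideanSpace ℝ (Fin m) := WithLp.toLp 2 ((E l).mulVec v) with hEv
    set c : EuclideanSpace ℝ (Fin m) := WithLp.toLp 2 (fun _ => ∑ i, v i) with hc
    have hd : Mv = p l • v + s l • (c - v) + Ev := congrArg (WithLp.toLp 2) (hdecomp v)
    have hfun : Mv - s l • (c - v) - Ev = p l • v := by rw [hd]; abel
    have hnorm : ‖Mv - s l • (c - v) - Ev‖ = p l * ‖v‖ := by
      rw [hfun, norm_smul, Real.norm_eq_abs, abs_of_pos hppos]
    have hcv : ‖c - v‖ ≤ ((m:ℝ)+1) * ‖v‖ := by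
      have h1 : ‖c‖ = Real.sqrt m * |∑ i, v i| := norm_const_vec _
      have h2 : |∑ i, v i| ≤ Real.sqrt m * ‖v‖ := abs_sum_le_sqrt v
      have h3 : ‖c - v‖ ≤ ‖c‖ + ‖v‖ := norm_sub_le _ _
      have h4 : Real.sqrt m * Real.sqrt m = (m:ℝ) := Real.mul_self_sqrt (by positivity)
      nlinarith [Real.sqrt_nonneg (m:ℝ), norm_nonneg v, abs_nonneg (∑ i, v i)]
    have hEv' : ‖Ev‖ ≤ S * ‖v‖ := by
      calc ‖Ev‖ ≤ euclideanOpNorm (E l) * ‖v‖ := mulVec_norm_le _ _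
        _ ≤ S * ‖v‖ := by
          have := (hE l).trans (hδS l)
          exact mul_le_mul_of_nonneg_right this (norm_nonneg v)
    have hscv : |s l| * ‖c - v‖ ≤ S * (((m:ℝ)+1) * ‖v‖) :=
      mul_le_mul (hs l) hcv (norm_nonneg _) hS
    have htri : ‖Mv - s l • (c - v) - Ev‖ ≤ ‖Mv‖ + |s l| * ‖c - v‖ + ‖Ev‖ := by
      calc ‖Mv - s l • (c - v) - Ev‖ ≤ ‖Mv - s l • (c - v)‖ + ‖Ev‖ := norm_sub_le _ _
        _ ≤ ‖Mv‖ + |s l| * ‖c - v‖ + ‖Ev‖ := by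
            have := norm_sub_le Mv (s l • (c - v))
            rw [norm_smul, Real.norm_eq_abs] at this
            linarith
    have hMv0 : ‖(show EuclideanSpace ℝ (Fin m) from WithLp.toLp 2 ((M l).mulVec v))‖ = ‖Mv‖ := rfl
    rw [hMv0]
    nlinarith [mul_le_mul_of_nonneg_right hhalf (norm_nonneg v), norm_nonneg v]
  -- injectivity and invertibility
  have hinj : Function.Injective (M l).mulVec := by
    intro v w hvw
    have h0 : (M l).mulVec (v - w) = 0 := by
      rw [Matrix.mulVec_sub, hvw, sub_self]
    have := key (show EuclideanSpace ℝ (Fin m) from WithLp.toLp 2 (v - w))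
    rw [show (show EuclideanSpace ℝ (Fin m) from WithLp.toLp 2 ((M l).mulVec ((show EuclideanSpace ℝ (Fin m) from WithLp.toLp 2 (v - w)) : Fin m → ℝ))) = 0 from congrArg (WithLp.toLp 2) h0, norm_zero] at this
    have hvw0 : ‖(show EuclideanSpace ℝ (Fin m) from WithLp.toLp 2 (v - w))‖ = 0 := by
      nlinarith [norm_nonneg (show EuclideanSpace ℝ (Fin m) from WithLp.toLp 2 (v - w))]
    have : (show EuclideanSpace ℝ (Fin m) from WithLp.toLp 2 (v - w)) = 0 := norm_eq_zero.mp hvw0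
    have : v - w = 0 := congrArg WithLp.ofLp this
    exact sub_eq_zero.mp this
  have hunit : IsUnit (M l) := Matrix.mulVec_injective_iff_isUnit.mp hinj
  have hdet : IsUnit (M l).det := (Matrix.isUnit_iff_isUnit_det _).mp hunit
  refine ⟨hdet, ?_⟩
  -- the solution vector
  set x : EuclideanSpace ℝ (Fin m) := (show EuclideanSpace ℝ (Fin m) from WithLp.toLp 2 ((M l)⁻¹.mulVec Y)) with hx
  have hMx : (M l).mulVec (x : Fin m → ℝ) = (Y : Fin m → ℝ) := by
    show (M l).mulVec ((M l)⁻¹.mulVec Y) = (Y : Fin m → ℝ)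
    rw [Matrix.mulVec_mulVec, Matrix.mul_nonsing_inv _ hdet, Matrix.one_mulVec]
  -- bound on ‖x‖
  have hxnorm : p l * ‖x‖ ≤ 2 * ‖Y‖ := by
    have h1 := key x
    have h2 : ‖(show EuclideanSpace ℝ (Fin m) from WithLp.toLp 2 ((M l).mulVec (x : Fin m → ℝ)))‖ = ‖Y‖ := by
      rw [show (show EuclideanSpace ℝ (Fin m) from WithLp.toLp 2 ((M l).mulVec (x : Fin m → ℝ))) = Y from congrArg (WithLp.toLp 2) hMx]
    linarith [h1, h2.symm ▸ h1]
  -- bound on the sum σ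
  set σ : ℝ := ∑ i, x i with hσ
  set Ex : EuclideanSpace ℝ (Fin m) := (show EuclideanSpace ℝ (Fin m) from WithLp.toLp 2 ((E l).mulVec (x : Fin m → ℝ))) with hEx
  have hsum : p l * σ + s l * ((m:ℝ) * σ - σ) + (∑ i, Ex i) = 0 := by
    have h0 : ∑ i, ((M l).mulVec (x : Fin m → ℝ)) i = 0 := by rw [hMx]; exact hY
    have h1 : ∀ i, ((M l).mulVec (x : Fin m → ℝ)) i = p l * x i + s l * (σ - x i) + Ex i := by
      intro i
      rw [hdecomp (x : Fin m → ℝ)]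
      simp only [Pi.add_apply, Pi.smul_apply, Pi.sub_apply, smul_eq_mul]
      rfl
    have h2 : ∑ i, ((M l).mulVec (x : Fin m → ℝ)) i
        = ∑ i, (p l * x i + s l * (σ - x i) + Ex i) :=
      Finset.sum_congr rfl (fun i _ => h1 i)
    have hstep : ∑ i, (p l * x i + s l * (σ - x i) + Ex i)
        = p l * σ + s l * ((m:ℝ) * σ - σ) + (∑ i, Ex i) := by
      rw [Finset.sum_add_distrib, Finset.sum_add_distrib, ← Finset.mul_sum, ← Finset.mul_sum,
        Finset.sum_sub_distrib, Finset.sum_const, Finset.card_univ, Fintype.card_fin,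
        nsmul_eq_mul, ← hσ]
    rw [h2, hstep] at h0
    exact h0
  have hsum2 : (p l + s l * ((m:ℝ) - 1)) * σ = -(∑ i, Ex i) := by
    have : p l * σ + s l * ((m:ℝ) * σ - σ) = (p l + s l * ((m:ℝ) - 1)) * σ := by ring
    linarith [hsum, this]
  have hExnorm : ‖Ex‖ ≤ δ l * ‖x‖ := by
    calc ‖Ex‖ ≤ euclideanOpNorm (E l) * ‖x‖ := mulVec_norm_le _ _
      _ ≤ δ l * ‖x‖ := mul_le_mul_of_nonneg_right (hE l) (norm_nonneg _)
  have hsumEx : |∑ i, Ex i| ≤ (m:ℝ) * (δ l * ‖x‖) := by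
    calc |∑ i, Ex i| ≤ Real.sqrt m * ‖Ex‖ := abs_sum_le_sqrt Ex
      _ ≤ (m:ℝ) * (δ l * ‖x‖) := by
        have h1 := sqrt_nat_le m (by omega)
        have h2 : (0:ℝ) ≤ δ l * ‖x‖ := mul_nonneg (hδ0 l) (norm_nonneg _)
        nlinarith [Real.sqrt_nonneg (m:ℝ), hExnorm, norm_nonneg Ex]
  have hcoef : p l / 2 ≤ |p l + s l * ((m:ℝ) - 1)| := by
    have h1 : p l - S * ((m:ℝ) - 1) ≤ p l + s l * ((m:ℝ) - 1) := by
      nlinarith [abs_le.mp (abs_le.mpr ⟨neg_abs_le (s l), le_abs_self (s l)⟩), hs l,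
        neg_abs_le (s l)]
    have h2 : p l + s l * ((m:ℝ) - 1) ≤ |p l + s l * ((m:ℝ) - 1)| := le_abs_self _
    nlinarith
  have hσbound : p l * |σ| ≤ 2 * ((m:ℝ) * (δ l * ‖x‖)) := by
    have h1 : |p l + s l * ((m:ℝ) - 1)| * |σ| = |∑ i, Ex i| := by
      rw [← abs_mul, hsum2, abs_neg]
    have h2 : p l / 2 * |σ| ≤ |p l + s l * ((m:ℝ) - 1)| * |σ| :=
      mul_le_mul_of_nonneg_right hcoef (abs_nonneg _)
    nlinarith [hsumEx]
  -- the test output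
  have hJk : (Matrix.of (fun (_ : Fin k) (_ : Fin m) => (1:ℝ))).mulVec (x : Fin m → ℝ)
      = fun _ => σ := by
    funext i; simp [Matrix.mulVec, dotProduct, hσ]
  have hTdecomp : (T l).mulVec (x : Fin m → ℝ)
      = u l • (fun (_ : Fin k) => σ) + (F l).mulVec (x : Fin m → ℝ) := by
    rw [hT l, Matrix.add_mulVec, Matrix.smul_mulVec, hJk]
  set cσ : EuclideanSpace ℝ (Fin k) := WithLp.toLp 2 (fun _ => σ) with hcσ
  set Fx : EuclideanSpace ℝ (Fin k) := (show EuclideanSpace ℝ (Fin k) from WithLp.toLp 2 ((F l).mulVec (x : Fin m → ℝ))) with hFx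
  have hgoalnorm : ‖(show EuclideanSpace ℝ (Fin k) from WithLp.toLp 2 ((T l).mulVec ((M l)⁻¹.mulVec Y)))‖
      ≤ S * ((k:ℝ) * |σ|) + δ l * ‖x‖ := by
    have heq : (show EuclideanSpace ℝ (Fin k) from WithLp.toLp 2 ((T l).mulVec ((M l)⁻¹.mulVec Y)))
        = u l • cσ + Fx := congrArg (WithLp.toLp 2) hTdecomp
    rw [heq]
    have h1 : ‖u l • cσ + Fx‖ ≤ |u l| * ‖cσ‖ + ‖Fx‖ := by
      have := norm_add_le (u l • cσ) Fx
      rw [norm_smul, Real.norm_eq_abs] at this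
      exact this
    have h2 : ‖cσ‖ = Real.sqrt k * |σ| := norm_const_vec σ
    have h3 : ‖cσ‖ ≤ (k:ℝ) * |σ| := by
      rw [h2]
      exact mul_le_mul_of_nonneg_right (sqrt_nat_le k hk) (abs_nonneg _)
    have h4 : ‖Fx‖ ≤ δ l * ‖x‖ := by
      calc ‖Fx‖ ≤ euclideanOpNorm (F l) * ‖x‖ := mulVec_norm_le _ _
        _ ≤ δ l * ‖x‖ := mul_le_mul_of_nonneg_right (hF l) (norm_nonneg _)
    have h5 : |u l| * ‖cσ‖ ≤ S * ((k:ℝ) * |σ|) :=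
      mul_le_mul (hu l) h3 (norm_nonneg _) hS
    linarith
  -- final arithmetic
  set LHS : ℝ := ‖(show EuclideanSpace ℝ (Fin k) from WithLp.toLp 2 ((T l).mulVec ((M l)⁻¹.mulVec Y)))‖ with hLHS
  have hLHS0 : 0 ≤ LHS := norm_nonneg _
  have hfin : p l ^ 2 * LHS ≤ (4*S*(k:ℝ)*(m:ℝ) + 2) * (δ l * p l + 1) * ‖Y‖ := by
    have hA : p l * (p l * |σ|) ≤ p l * (2 * ((m:ℝ) * (δ l * ‖x‖))) :=
      mul_le_mul_of_nonneg_left hσbound (le_of_lt hppos)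
    have hB : 2 * (m:ℝ) * δ l * (p l * ‖x‖) ≤ 2 * (m:ℝ) * δ l * (2 * ‖Y‖) :=
      mul_le_mul_of_nonneg_left hxnorm (mul_nonneg (by positivity) (hδ0 l))
    have hA2 : p l ^ 2 * |σ| ≤ 4 * (m:ℝ) * δ l * ‖Y‖ := by nlinarith
    have hC : p l * (δ l * (p l * ‖x‖)) ≤ p l * (δ l * (2 * ‖Y‖)) := by
      have := mul_le_mul_of_nonneg_left hxnorm (hδ0 l)
      exact mul_le_mul_of_nonneg_left this (le_of_lt hppos)
    have hmain : p l ^ 2 * LHS ≤ p l ^ 2 * (S * ((k:ℝ) * |σ|) + δ l * ‖x‖) :=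
      mul_le_mul_of_nonneg_left hgoalnorm (by positivity)
    have hSk0 : 0 ≤ S * (k:ℝ) := by positivity
    have hY0 : 0 ≤ ‖Y‖ := norm_nonneg _
    have e2 : S*(k:ℝ)*(p l^2*|σ|) ≤ S*(k:ℝ)*(4*(m:ℝ)*(δ l)*‖Y‖) :=
      mul_le_mul_of_nonneg_left hA2 hSk0
    have e4 : δ l * ‖Y‖ ≤ δ l * p l * ‖Y‖ := by
      nlinarith [mul_nonneg (mul_nonneg (hδ0 l) hY0) (show (0:ℝ) ≤ p l - 1 by linarith)]
    have e5 : 4*S*(k:ℝ)*(m:ℝ)*(δ l * ‖Y‖) ≤ 4*S*(k:ℝ)*(m:ℝ)*(δ l * p l * ‖Y‖) :=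
      mul_le_mul_of_nonneg_left e4 (by positivity)
    have h6 : 0 ≤ S*(k:ℝ)*(m:ℝ)*‖Y‖ := by positivity
    nlinarith [hmain, e2, hC, e5, h6, hY0]
  have hrw : (4*S*(k:ℝ)*(m:ℝ) + 2) * (δ l + (p l)⁻¹) * (p l)⁻¹ * ‖Y‖
      = ((4*S*(k:ℝ)*(m:ℝ) + 2) * (δ l * p l + 1) * ‖Y‖) / (p l ^ 2) := by
    rw [eq_div_iff (by positivity : (p l:ℝ)^2 ≠ 0)]
    have hpne : p l ≠ 0 := ne_of_gt hppos
    field_simp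
    try ring
    try exact Or.inl trivial
  rw [hrw, le_div_iff₀ (by positivity : (0:ℝ) < p l ^ 2)]
  calc LHS * p l ^ 2 = p l ^ 2 * LHS := by ring
    _ ≤ _ := hfin
end

section
/- Define g : [−1, 1] → ℝ by g(c) = (√(1 − c²) + c·(π − arccos c)) / π. Then there exist constants C > 0 and ε₀ > 0 such that for all 0 < ε < ε₀: |g(1 − ε) − (1 − ε + (2√2/(3π))·ε^{3/2})| ≤ C·ε^{5/2}. -/
open Real

set_option maxHeartbeats 1000000

private lemma sqrt_one_sub_sq_pos {y : ℝ} (h1 : -1 < y) (h2 : y < 1) :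
    0 < Real.sqrt (1 - y ^ 2) := by
  apply Real.sqrt_pos.2; nlinarith

private lemma arcsin_ge (x : ℝ) (hx0 : 0 ≤ x) (hx : x ≤ 1/2) :
    x + x^3/6 ≤ Real.arcsin x := by
  have key : MonotoneOn (fun y => Real.arcsin y - (y + y^3/6)) (Set.Icc (0:ℝ) (1/2)) := by
    apply monotoneOn_of_deriv_nonneg (convex_Icc _ _)
    · exact (Real.continuous_arcsin.sub
        (continuous_id.add ((continuous_pow 3).div_const 6))).continuousOn
    · rw [interior_Icc]
      intro y hy
      obtain ⟨hy0, hy1⟩ := hy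
      have hD : HasDerivAt (fun y : ℝ => Real.arcsin y - (y + y^3/6))
          (1 / Real.sqrt (1 - y^2) - (1 + y^2/2)) y := by
        have := (Real.hasDerivAt_arcsin (by norm_num; linarith) (by linarith)).sub
          ((hasDerivAt_id' (x := y)).add ((hasDerivAt_pow 3 y).div_const 6))
        refine this.congr_deriv ?_
        norm_num; ring
      exact hD.differentiableAt.differentiableWithinAt
    · rw [interior_Icc]
      intro y hy
      obtain ⟨hy0, hy1⟩ := hy
      have hD : HasDerivAt (fun y : ℝ => Real.arcsin y - (y + y^3/6))
          (1 / Real.sqrt (1 - y^2) - (1 + y^2/2)) y := by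
        have := (Real.hasDerivAt_arcsin (by norm_num; linarith) (by linarith)).sub
          ((hasDerivAt_id' (x := y)).add ((hasDerivAt_pow 3 y).div_const 6))
        refine this.congr_deriv ?_
        norm_num; ring
      rw [hD.deriv]
      have hs : 0 < Real.sqrt (1 - y ^ 2) := sqrt_one_sub_sq_pos (by linarith) (by linarith)
      have hsq : Real.sqrt (1 - y^2) ^ 2 = 1 - y^2 := Real.sq_sqrt (by nlinarith)
      have hP2 : (Real.sqrt (1 - y^2) * (1 + y^2/2))^2 ≤ 1 := by
        rw [mul_pow, hsq]
        nlinarith [sq_nonneg y, sq_nonneg (y^2), sq_nonneg (y^3)]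
      have hP0 : 0 ≤ Real.sqrt (1 - y^2) * (1 + y^2/2) := by positivity
      have hP1 : Real.sqrt (1 - y^2) * (1 + y^2/2) ≤ 1 := by nlinarith
      rw [sub_nonneg, le_div_iff₀ hs]
      nlinarith
  have h0 : (0:ℝ) ∈ Set.Icc (0:ℝ) (1/2) := by constructor <;> norm_num
  have hxm : x ∈ Set.Icc (0:ℝ) (1/2) := ⟨hx0, hx⟩
  have := key h0 hxm hx0
  simp only [Real.arcsin_zero] at this
  norm_num at this
  linarith

private lemma arcsin_le (x : ℝ) (hx0 : 0 ≤ x) (hx : x ≤ 1/2) :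
    Real.arcsin x ≤ x + x^3/6 + x^5 := by
  have key : MonotoneOn (fun y => (y + y^3/6 + y^5) - Real.arcsin y) (Set.Icc (0:ℝ) (1/2)) := by
    apply monotoneOn_of_deriv_nonneg (convex_Icc _ _)
    · exact (((continuous_id.add ((continuous_pow 3).div_const 6)).add
        (continuous_pow 5)).sub Real.continuous_arcsin).continuousOn
    · rw [interior_Icc]
      intro y hy
      obtain ⟨hy0, hy1⟩ := hy
      have hD : HasDerivAt (fun y : ℝ => (y + y^3/6 + y^5) - Real.arcsin y)
          ((1 + y^2/2 + 5*y^4) - 1 / Real.sqrt (1 - y^2)) y := by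
        have := (((hasDerivAt_id' (x := y)).add ((hasDerivAt_pow 3 y).div_const 6)).add
          (hasDerivAt_pow 5 y)).sub
          (Real.hasDerivAt_arcsin (by norm_num; linarith) (by linarith))
        refine this.congr_deriv ?_
        norm_num; ring
      exact hD.differentiableAt.differentiableWithinAt
    · rw [interior_Icc]
      intro y hy
      obtain ⟨hy0, hy1⟩ := hy
      have hD : HasDerivAt (fun y : ℝ => (y + y^3/6 + y^5) - Real.arcsin y)
          ((1 + y^2/2 + 5*y^4) - 1 / Real.sqrt (1 - y^2)) y := by
        have := (((hasDerivAt_id' (x := y)).add ((hasDerivAt_pow 3 y).div_const 6)).add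
          (hasDerivAt_pow 5 y)).sub
          (Real.hasDerivAt_arcsin (by norm_num; linarith) (by linarith))
        refine this.congr_deriv ?_
        norm_num; ring
      rw [hD.deriv]
      have hs : 0 < Real.sqrt (1 - y ^ 2) := sqrt_one_sub_sq_pos (by linarith) (by linarith)
      have hsq : Real.sqrt (1 - y^2) ^ 2 = 1 - y^2 := Real.sq_sqrt (by nlinarith)
      have hu : y^2 ≤ 1/4 := by nlinarith
      have hQ2 : 1 ≤ ((1 + y^2/2 + 5*y^4) * Real.sqrt (1 - y^2))^2 := by
        rw [mul_pow, hsq]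
        nlinarith [sq_nonneg y, sq_nonneg (y^2), sq_nonneg (y^3), hu,
          mul_nonneg (mul_nonneg (sq_nonneg y) (sq_nonneg y)) (sub_nonneg.2 hu),
          mul_nonneg (sq_nonneg (y^2)) (sub_nonneg.2 hu),
          mul_nonneg (sq_nonneg y) (sub_nonneg.2 hu)]
      have hQ0 : 0 ≤ (1 + y^2/2 + 5*y^4) * Real.sqrt (1 - y^2) := by positivity
      have hQ1 : 1 ≤ (1 + y^2/2 + 5*y^4) * Real.sqrt (1 - y^2) := by nlinarith
      rw [sub_nonneg, div_le_iff₀ hs]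
      linarith
  have h0 : (0:ℝ) ∈ Set.Icc (0:ℝ) (1/2) := by constructor <;> norm_num
  have hxm : x ∈ Set.Icc (0:ℝ) (1/2) := ⟨hx0, hx⟩
  have := key h0 hxm hx0
  simp only [Real.arcsin_zero] at this
  norm_num at this
  linarith

/-- **Asymptotic expansion of the ReLU dual kernel near `c = 1`.**
For `g c = (√(1 - c²) + c * (π - arccos c)) / π` there are `C > 0` and `ε₀ > 0`
with `|g (1 - ε) - (1 - ε + (2√2/(3π)) ε^{3/2})| ≤ C ε^{5/2}` for `0 < ε < ε₀`. -/
theorem relu_dual_kernel_expansion :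
    ∃ C > (0 : ℝ), ∃ ε₀ > (0 : ℝ), ∀ ε : ℝ, 0 < ε → ε < ε₀ →
      |(Real.sqrt (1 - (1 - ε) ^ 2)
          + (1 - ε) * (Real.pi - Real.arccos (1 - ε))) / Real.pi
        - (1 - ε + (2 * Real.sqrt 2 / (3 * Real.pi)) * ε ^ ((3 : ℝ) / 2))|
      ≤ C * ε ^ ((5 : ℝ) / 2) := by
  refine ⟨1, one_pos, 1/2, by norm_num, fun ε hε hε2 => ?_⟩
  have hx0 : 0 ≤ Real.sqrt (ε/2) := Real.sqrt_nonneg _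
  set x : ℝ := Real.sqrt (ε/2) with hxdef
  have hx2 : x ^ 2 = ε / 2 := Real.sq_sqrt (by linarith)
  have hx12 : x ≤ 1/2 := by
    rw [hxdef, show (1:ℝ)/2 = Real.sqrt ((1/2)^2) from (Real.sqrt_sq (by norm_num)).symm]
    apply Real.sqrt_le_sqrt; nlinarith
  have hxs : x^2 ≤ 1/4 := by nlinarith
  have hεx : ε = 2 * x ^ 2 := by rw [hx2]; ring
  have h2 : Real.sqrt 2 ^ 2 = 2 := Real.sq_sqrt (by norm_num)
  have h2n : (0:ℝ) ≤ Real.sqrt 2 := Real.sqrt_nonneg 2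
  have h23 : Real.sqrt 2 ^ 3 = 2 * Real.sqrt 2 := by
    rw [pow_succ, h2]
  have h25 : Real.sqrt 2 ^ 5 = 4 * Real.sqrt 2 := by
    rw [show (5:ℕ) = 3 + 2 from rfl, pow_add, h23, h2]; ring
  -- sqrt ε = √2 * x
  have hsε : Real.sqrt ε = Real.sqrt 2 * x := by
    rw [hxdef, ← Real.sqrt_mul (by norm_num : (0:ℝ) ≤ 2) (ε/2),
      show (2:ℝ)*(ε/2) = ε by ring]
  -- rpow expansions
  have h32 : ε ^ ((3:ℝ)/2) = 2 * Real.sqrt 2 * x ^ 3 := by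
    have h : ε ^ ((3:ℝ)/2) = Real.sqrt ε ^ (3:ℕ) := by
      rw [Real.sqrt_eq_rpow, ← Real.rpow_natCast (ε ^ ((1:ℝ)/2)) 3,
        ← Real.rpow_mul hε.le]
      norm_num
    rw [h, hsε, mul_pow, h23]
  have h52 : ε ^ ((5:ℝ)/2) = 4 * Real.sqrt 2 * x ^ 5 := by
    have h : ε ^ ((5:ℝ)/2) = Real.sqrt ε ^ (5:ℕ) := by
      rw [Real.sqrt_eq_rpow, ← Real.rpow_natCast (ε ^ ((1:ℝ)/2)) 5,
        ← Real.rpow_mul hε.le]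
      norm_num
    rw [h, hsε, mul_pow, h25]
  -- arccos identity
  have hA : Real.arccos (1 - ε) = 2 * Real.arcsin x := by
    have hc : Real.cos (2 * Real.arcsin x) = 1 - ε := by
      rw [Real.cos_two_mul, Real.cos_arcsin, Real.sq_sqrt (by nlinarith), hx2]
      ring
    rw [← hc]
    refine Real.arccos_cos ?_ ?_
    · have := Real.arcsin_nonneg.2 hx0; linarith
    · have := Real.arcsin_le_pi_div_two x; linarith
  set A := Real.arcsin x with hAdef
  have hA1 : x + x^3/6 ≤ A := arcsin_ge x hx0 hx12
  have hA2 : A ≤ x + x^3/6 + x^5 := arcsin_le x hx0 hx12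
  -- sqrt(1-(1-ε)^2) = 2x * sqrt(1-x^2)
  set S := Real.sqrt (1 - x^2) with hSdef
  have hS0 : 0 ≤ S := Real.sqrt_nonneg _
  have hroot : Real.sqrt (1 - (1-ε)^2) = 2 * x * S := by
    rw [show 1 - (1-ε)^2 = (2*x)^2 * (1 - x^2) by rw [hεx]; ring,
      Real.sqrt_mul (sq_nonneg _), Real.sqrt_sq (by linarith)]
  have hS1 : 1 - x^2/2 - x^4/2 ≤ S := by
    rw [hSdef, show (1:ℝ) - x^2/2 - x^4/2 = Real.sqrt ((1 - x^2/2 - x^4/2)^2) from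
      (Real.sqrt_sq (by nlinarith)).symm]
    apply Real.sqrt_le_sqrt
    nlinarith [sq_nonneg x, sq_nonneg (x^2), mul_nonneg (sq_nonneg x) (sq_nonneg x)]
  have hS2 : S ≤ 1 - x^2/2 := by
    rw [hSdef, show (1:ℝ) - x^2/2 = Real.sqrt ((1 - x^2/2)^2) from
      (Real.sqrt_sq (by nlinarith)).symm]
    apply Real.sqrt_le_sqrt; nlinarith [sq_nonneg x, sq_nonneg (x^2)]
  have hπ : (0:ℝ) < Real.pi := Real.pi_pos
  have hπ3 : (3:ℝ) < Real.pi := Real.pi_gt_three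
  -- rewrite goal
  rw [hroot, hA, h32, h52, hεx]
  have hconst : 2 * Real.sqrt 2 / (3 * Real.pi) * (2 * Real.sqrt 2 * x ^ 3)
      = 8 * x^3 / (3 * Real.pi) := by
    rw [div_mul_eq_mul_div]
    congr 1
    linear_combination (4 * x^3) * h2
  rw [hconst]
  set N := 2 * x * S - 2 * (1 - 2*x^2) * A - (8/3) * x^3 with hN
  have hkey : (2*x*S + (1 - 2*x^2) * (Real.pi - 2*A)) / Real.pi
      - (1 - 2*x^2 + 8 * x^3 / (3*Real.pi)) = N / Real.pi := by
    rw [hN]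
    field_simp
    ring
  rw [hkey, abs_div, abs_of_pos hπ]
  have hc0 : (0:ℝ) ≤ 2*(1-2*x^2) := by nlinarith
  have hbS2 : 2*x*S ≤ 2*x*(1-x^2/2) := by
    rw [mul_comm (2*x) S, mul_comm (2*x) _]
    exact mul_le_mul_of_nonneg_right hS2 (by linarith)
  have hbS1 : 2*x*(1 - x^2/2 - x^4/2) ≤ 2*x*S := by
    rw [mul_comm (2*x) S, mul_comm (2*x) _]
    exact mul_le_mul_of_nonneg_right hS1 (by linarith)
  have hbA1 : 2*(1-2*x^2)*(x + x^3/6) ≤ 2*(1-2*x^2)*A :=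
    mul_le_mul_of_nonneg_left hA1 hc0
  have hbA2 : 2*(1-2*x^2)*A ≤ 2*(1-2*x^2)*(x + x^3/6 + x^5) :=
    mul_le_mul_of_nonneg_left hA2 hc0
  have hNb : |N| ≤ 4 * x^5 := by
    rw [abs_le]
    constructor <;> rw [hN] <;>
      nlinarith [pow_nonneg hx0 5, pow_nonneg hx0 7, hbS1, hbS2, hbA1, hbA2]
  have hx5 : 0 ≤ x^5 := pow_nonneg hx0 5
  have h2ge : (1:ℝ) ≤ Real.sqrt 2 := by nlinarith
  have hd : |N| / Real.pi ≤ |N| := div_le_self (abs_nonneg N) (by linarith)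
  have hfin : 4 * x^5 ≤ 1 * (4 * Real.sqrt 2 * x^5) := by nlinarith
  linarith
end
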